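/- For L ≤ 1/2 and K > 0, the jointly optimal peak AoI is A_p* = 2·exp{L + K}, attained at q* = 1 and ξ* = 1; for L > 1/2, A_p* = [L(√(1+4/L)+1)+2]/(2·exp{-2/(√(1+4/L)+1) - K}), attained at q* = 1 and ξ* = 2e^{-2/(√(1+4/L)+1)-K}/[L(√(1+4/L)+1) + 2e^{-2/(√(1+4/L)+1)-K} - 2]. -/

import Mathlib

open Real Set

lemma lower_aux (L K T0 : ℝ) (hL : 0 < L) (hT0 : 0 < T0) (hT01 : T0 < 1)
    (hsign : ∀ T : ℝ, 0 < T → T ≤ L → 0 ≤ (T - T0) * (T0 * L + T0 * T - L)) :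
    ∀ q ξ p : ℝ, q ∈ Ioc (0:ℝ) 1 → ξ ∈ Ioc (0:ℝ) 1 → p ∈ Ioc (0:ℝ) 1 →
    p = Real.exp (-(L * q * ξ) / (ξ + p * q * (1 - ξ)) - K) →
    Real.exp (T0 + K) * (L + T0) / T0 ≤ 1 / ξ + 2 / (q * p) - 1 := by
  rintro q ξ p ⟨hq0, hq1⟩ ⟨hξ0, hξ1⟩ ⟨hp0, hp1⟩ hfix
  set D : ℝ := ξ + p * q * (1 - ξ) with hD
  have hD0 : 0 < D := by
    have : 0 ≤ p * q * (1 - ξ) := mul_nonneg (mul_nonneg hp0.le hq0.le) (by linarith)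
    linarith
  set T : ℝ := L * q * ξ / D with hT
  have hT0' : 0 < T := hT ▸ div_pos (by positivity) hD0
  have hTD : T * D = L * q * ξ := by rw [hT]; field_simp
  have hpT : p = Real.exp (-(T + K)) := by
    rw [hfix]; congr 1; rw [hT]; ring
  clear_value T D
  clear hfix hT
  have hξD : ξ ≤ D := by nlinarith [mul_pos hp0 hq0]
  have hTLq : T ≤ L * q := by nlinarith [mul_pos hL hq0]
  have hTL : T ≤ L := le_trans hTLq (by nlinarith)
  have hTne : T ≠ 0 := ne_of_gt hT0'
  rw [hD] at hTD
  have hobj : 1 / ξ + 2 / (q * p) - 1 = (L * q + T) / (T * p * q) := by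
    field_simp
    linear_combination hTD
  rw [hobj]
  have step1 : (L + T) / (T * p) ≤ (L * q + T) / (T * p * q) := by
    rw [div_le_div_iff₀ (by positivity) (by positivity)]
    nlinarith [mul_pos hT0' hp0, mul_nonneg (mul_nonneg hT0'.le hp0.le) (sub_nonneg.2 hq1)]
  refine le_trans ?_ step1
  have h2 : (L + T) / (T * p) = Real.exp (T + K) * (L + T) / T := by
    rw [hpT, Real.exp_neg]
    field_simp
  rw [h2, div_le_div_iff₀ hT0 hT0']
  have hexp : Real.exp (T0 + K) * (T - T0 + 1) ≤ Real.exp (T + K) := by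
    have := Real.add_one_le_exp (T - T0)
    calc Real.exp (T0 + K) * (T - T0 + 1) ≤ Real.exp (T0 + K) * Real.exp (T - T0) := by
          nlinarith [Real.exp_pos (T0 + K)]
      _ = Real.exp (T + K) := by rw [← Real.exp_add]; ring_nf
  have hkey := hsign T hT0' hTL
  have ha := mul_le_mul_of_nonneg_right hexp
    (mul_nonneg (by nlinarith : (0:ℝ) ≤ L + T) hT0.le)
  have hb := mul_nonneg (Real.exp_pos (T0 + K)).le hkey
  nlinarith [ha, hb]

theorem stmt16 (L K : ℝ) (hL : 0 < L) (hK : 0 < K) :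
    (L ≤ 1 / 2 →
      (∀ q ξ p : ℝ, q ∈ Ioc (0:ℝ) 1 → ξ ∈ Ioc (0:ℝ) 1 → p ∈ Ioc (0:ℝ) 1 →
        p = Real.exp (-(L * q * ξ) / (ξ + p * q * (1 - ξ)) - K) →
        2 * Real.exp (L + K) ≤ 1 / ξ + 2 / (q * p) - 1) ∧
      Real.exp (-(L + K))
        = Real.exp (-(L * 1 * 1) / (1 + Real.exp (-(L + K)) * 1 * (1 - 1)) - K) ∧
      1 / (1:ℝ) + 2 / (1 * Real.exp (-(L + K))) - 1 = 2 * Real.exp (L + K)) ∧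
    (1 / 2 < L →
      let s := Real.sqrt (1 + 4 / L);
      let V := (L * (s + 1) + 2) / (2 * Real.exp (-2 / (s + 1) - K));
      let ξs := 2 * Real.exp (-2 / (s + 1) - K) /
        (L * (s + 1) + 2 * Real.exp (-2 / (s + 1) - K) - 2);
      ξs ∈ Ioo (0:ℝ) 1 ∧
      (∀ q ξ p : ℝ, q ∈ Ioc (0:ℝ) 1 → ξ ∈ Ioc (0:ℝ) 1 → p ∈ Ioc (0:ℝ) 1 →
        p = Real.exp (-(L * q * ξ) / (ξ + p * q * (1 - ξ)) - K) →
        V ≤ 1 / ξ + 2 / (q * p) - 1) ∧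
      (∃ p ∈ Ioc (0:ℝ) 1,
        p = Real.exp (-(L * 1 * ξs) / (ξs + p * 1 * (1 - ξs)) - K) ∧
        1 / ξs + 2 / (1 * p) - 1 = V)) := by
  constructor
  · -- case L ≤ 1/2
    intro hL2
    refine ⟨?_, ?_, ?_⟩
    · intro q ξ p hq hξ hp hfix
      have hsign : ∀ T : ℝ, 0 < T → T ≤ L → 0 ≤ (T - L) * (L * L + L * T - L) := by
        intro T hT hTL
        have h1 : 0 ≤ L - T := by linarith
        have h2 : 0 ≤ L - L * L - L * T :=
          by nlinarith [mul_nonneg hL.le (by linarith : (0:ℝ) ≤ 1 - L - T)]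
        nlinarith [mul_nonneg h1 h2]
      have h := lower_aux L K L hL hL (by linarith) hsign q ξ p hq hξ hp hfix
      have heq : Real.exp (L + K) * (L + L) / L = 2 * Real.exp (L + K) := by
        field_simp; ring
      linarith [heq ▸ h]
    · congr 1
      norm_num
      ring
    · have he := Real.exp_pos (L + K)
      rw [Real.exp_neg]
      field_simp
      ring
  · -- case 1/2 < L
    intro hL2
    intro s V ξs
    have hs : s = Real.sqrt (1 + 4 / L) := rfl
    have hV : V = (L * (s + 1) + 2) / (2 * Real.exp (-2 / (s + 1) - K)) := rfl
    have hξs : ξs = 2 * Real.exp (-2 / (s + 1) - K) /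
        (L * (s + 1) + 2 * Real.exp (-2 / (s + 1) - K) - 2) := rfl
    clear_value s V ξs
    have hs0 : 0 ≤ s := hs ▸ Real.sqrt_nonneg _
    have hs2 : s ^ 2 = 1 + 4 / L := by
      rw [hs, sq, Real.mul_self_sqrt (by positivity)]
    have h4 : 0 < 4 / L := by positivity
    have hs1 : 1 < s := by nlinarith [h4, hs0, hs2]
    have hLss : L * s ^ 2 = L + 4 := by
      rw [hs2]; field_simp
    have hs3 : s < 3 := by
      nlinarith [hs2, hs0, (div_lt_iff₀ hL).2 (by linarith : (4:ℝ) < 8 * L)]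
    have hid : (L * s + L - 2) * (s - 1) = 6 - 2 * s := by linear_combination hLss
    have hLs : 2 < L * (s + 1) := by nlinarith [hid, hs1, hs3]
    set T0 : ℝ := 2 / (s + 1) with hT0def
    clear_value T0
    have hT0 : 0 < T0 := by rw [hT0def]; positivity
    have hT01 : T0 < 1 := by rw [hT0def, div_lt_one (by linarith)]; linarith
    have hT0s : T0 * (s + 1) = 2 := by rw [hT0def]; field_simp
    have hquad : T0 * (L + T0) = L := by
      rw [hT0def]
      field_simp
      linarith [hLss]
    set p0 : ℝ := Real.exp (-2 / (s + 1) - K) with hp0def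
    have hp0 : 0 < p0 := hp0def ▸ Real.exp_pos _
    clear_value p0
    have hexpneg : -2 / (s + 1) - K < 0 := by
      have h1 : (-2) / (s + 1) < 0 := div_neg_of_neg_of_pos (by norm_num) (by linarith)
      linarith
    have hp01 : p0 < 1 := by
      have h := Real.exp_lt_exp.2 hexpneg
      rwa [Real.exp_zero, ← hp0def] at h
    have hE : 0 < L * (s + 1) + 2 * p0 - 2 := by nlinarith
    have hp0T : p0 = Real.exp (-(T0 + K)) := by
      rw [hp0def, hT0def]; congr 1; rw [neg_div]; ring
    have hinv : Real.exp (T0 + K) = p0⁻¹ := by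
      rw [hp0T, ← Real.exp_neg]; ring_nf
    have hVval : (L * (s + 1) + 2) / (2 * p0) = Real.exp (T0 + K) * (L + T0) / T0 := by
      rw [hinv, div_eq_div_iff (by positivity) (ne_of_gt hT0)]
      field_simp
      linear_combination L * hT0s
    refine ⟨?_, ?_, ?_⟩
    · constructor
      · rw [hξs]; positivity
      · rw [hξs, div_lt_one hE]; linarith
    · intro q ξ p hq hξ hp hfix
      have hsign : ∀ T : ℝ, 0 < T → T ≤ L → 0 ≤ (T - T0) * (T0 * L + T0 * T - L) := by
        intro T hT hTL
        have heq : T0 * L + T0 * T - L = T0 * (T - T0) := by linear_combination hquad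
        rw [heq]
        nlinarith [sq_nonneg (T - T0)]
      have h := lower_aux L K T0 hL hT0 hT01 hsign q ξ p hq hξ hp hfix
      rw [hV, hVval]
      exact h
    · refine ⟨p0, ⟨hp0, hp01.le⟩, ?_, ?_⟩
      · rw [hξs]
        have hden : 2 * p0 / (L * (s + 1) + 2 * p0 - 2) + p0 * 1 *
            (1 - 2 * p0 / (L * (s + 1) + 2 * p0 - 2))
            = p0 * (L * (s + 1)) / (L * (s + 1) + 2 * p0 - 2) := by
          field_simp
          ring
        rw [hden]
        conv_lhs => rw [hp0def]
        congr 1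
        rw [mul_div_assoc', neg_div', div_div_div_cancel_right₀ hE.ne']
        field_simp
      · rw [hξs, hV]
        rw [one_mul]
        field_simp
        ring
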